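/- Let K be a field of characteristic zero, a_1, a_2 ∈ K with a_1 ≠ 0 and with (j−1)·a_1 − (j−2)·a_2 ≠ 0 for all j ≥ 3, and b ∈ K. Define λ_{i,1} = a_1·i + b, λ_{i,2} = a_2·i + b, and λ_{i,j} = (a_1·a_2·i)/((j−1)·a_1 − (j−2)·a_2) + b for j ≥ 3. Then the pre-Lie relation λ_{i,j}·λ_{i+j,k} − λ_{j,k}·λ_{i,j+k} = λ_{i,k}·λ_{i+k,j} − λ_{k,j}·λ_{i,j+k} holds for all positive integers i, j, k. -/

import Mathlib

/-- Case A of the classification of strong first-order sequences satisfies the pre-Lie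
relation. -/
theorem caseA_preLie (K : Type*) [Field K] [CharZero K] (a1 a2 b : K)
    (ha1 : a1 ≠ 0)
    (hden : ∀ j : ℕ, 3 ≤ j → ((j : K) - 1) * a1 - ((j : K) - 2) * a2 ≠ 0)
    (l : ℕ → ℕ → K)
    (hl1 : ∀ i : ℕ, 1 ≤ i → l i 1 = a1 * (i : K) + b)
    (hl2 : ∀ i : ℕ, 1 ≤ i → l i 2 = a2 * (i : K) + b)
    (hl3 : ∀ i j : ℕ, 1 ≤ i → 3 ≤ j →
      l i j = a1 * a2 * (i : K) / (((j : K) - 1) * a1 - ((j : K) - 2) * a2) + b)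
    (i j k : ℕ) (hi : 1 ≤ i) (hj : 1 ≤ j) (hk : 1 ≤ k) :
    l i j * l (i + j) k - l j k * l i (j + k) =
      l i k * l (i + k) j - l k j * l i (j + k) := by
  by_cases ha2 : a2 = 0
  · -- degenerate case: l m n = b for n ≥ 2, l m 1 = a1 * m + b
    have key : ∀ m n : ℕ, 1 ≤ m → 2 ≤ n → l m n = b := by
      intro m n hm hn
      rcases Nat.lt_or_ge n 3 with h | h
      · have : n = 2 := by omega
        subst this; rw [hl2 m hm, ha2]; ring
      · rw [hl3 m n hm h, ha2]; simp
    rcases Nat.lt_or_ge j 2 with hj2 | hj2 <;> rcases Nat.lt_or_ge k 2 with hk2 | hk2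
    · have hj1 : j = 1 := by omega
      have hk1 : k = 1 := by omega
      subst hj1; subst hk1; ring
    · have hj1 : j = 1 := by omega
      subst hj1
      rw [hl1 i hi, hl1 (i+k) (by omega), hl1 k hk, key 1 k le_rfl hk2,
        key i k hi hk2, key (i+1) k (by omega) hk2, key i (1+k) hi (by omega)]
      push_cast; ring
    · have hk1 : k = 1 := by omega
      subst hk1
      rw [hl1 i hi, hl1 (i+j) (by omega), hl1 j hj, key 1 j le_rfl hj2,
        key i j hi hj2, key (i+1) j (by omega) hj2, key i (j+1) hi (by omega)]
      push_cast; ring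
    · rw [key i j hi hj2, key (i+j) k (by omega) hk2, key j k hj hk2,
        key i k hi hk2, key (i+k) j (by omega) hj2, key k j hk hj2]
  · -- generic case: uniform formula
    have hc : ∀ n : ℕ, 1 ≤ n → ((n : K) - 1) * a1 - ((n : K) - 2) * a2 ≠ 0 := by
      intro n hn
      rcases Nat.lt_or_ge n 3 with h | h
      · interval_cases n
        · have e : ((1:K) - 1) * a1 - ((1:K) - 2) * a2 = a2 := by ring
          push_cast; rw [e]; exact ha2
        · have e : ((2:K) - 1) * a1 - ((2:K) - 2) * a2 = a1 := by ring
          push_cast; rw [e]; exact ha1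
      · exact hden n h
    have key : ∀ m n : ℕ, 1 ≤ m → 1 ≤ n →
        l m n = a1 * a2 * (m : K) / (((n : K) - 1) * a1 - ((n : K) - 2) * a2) + b := by
      intro m n hm hn
      rcases Nat.lt_or_ge n 3 with h | h
      · interval_cases n
        · have e : ((1:K) - 1) * a1 - ((1:K) - 2) * a2 = a2 := by ring
          rw [hl1 m hm]; push_cast; rw [e]
          field_simp
        · have e : ((2:K) - 1) * a1 - ((2:K) - 2) * a2 = a1 := by ring
          rw [hl2 m hm]; push_cast; rw [e]
          field_simp
      · exact hl3 m n hm h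
    rw [key i j hi hj, key (i+j) k (by omega) hk, key j k hj hk,
      key i (j+k) hi (by omega), key i k hi hk, key (i+k) j (by omega) hj,
      key k j hk hj]
    have h1 := hc j hj
    have h2 := hc k hk
    have h3 := hc (j+k) (by omega)
    push_cast at h1 h2 h3 ⊢
    rw [mul_comm _ a1, mul_comm _ a2] at h1 h2 h3; field_simp
    ring
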